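/- Every null sequence of length at least 3 with exactly one entry equal to 1 can be obtained from the sequence (2,1,2) by a finite chain of strict blowups in which every intermediate sequence has exactly one entry equal to 1 and each blowup is performed either at the index immediately preceding the unique entry equal to 1 (a blowup at s = i−1, where i is the position of the unique 1) or at the index of the unique entry equal to 1 (a blowup at s = i). -/

import Mathlib

/-- `l'` is a strict blowup of `l`: either an interior blowup
`(n₁,…,n_{s−1}, n_s+1, 1, n_{s+1}+1, n_{s+2},…,n_k)` for some `1 ≤ s ≤ k−1`,
or the end blowup `(n₁,…,n_{k−1}, n_k+1, 1)`. -/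
def IsStrictBlowup (l l' : List ℤ) : Prop :=
  (∃ (A B : List ℤ) (a b : ℤ), l = A ++ a :: b :: B ∧
      l' = A ++ (a + 1) :: 1 :: (b + 1) :: B) ∨
  (∃ (A : List ℤ) (a : ℤ), l = A ++ [a] ∧ l' = A ++ [a + 1, 1])

/-- A null sequence is a finite integer sequence obtained from the one-term
sequence `(0)` by finitely many strict blowups. -/
def IsNullSeq (l : List ℤ) : Prop :=
  Relation.ReflTransGen IsStrictBlowup [0] l

/-- The strict blowup of `l` at the 1-based index `s`, `1 ≤ s ≤ l.length`:
for `s < l.length` it is `(n₁,…,n_{s−1}, n_s+1, 1, n_{s+1}+1, n_{s+2},…,n_k)`,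
and for `s = l.length` it is `(n₁,…,n_{k−1}, n_k+1, 1)`. -/
def blowupAt (l : List ℤ) (s : ℕ) : List ℤ :=
  if s = l.length then l.take (s - 1) ++ [l.getD (s - 1) 0 + 1, 1]
  else l.take (s - 1) ++ [l.getD (s - 1) 0 + 1, 1, l.getD s 0 + 1] ++ l.drop (s + 1)

section aux

lemma getD_mid (A : List ℤ) (a : ℤ) (B : List ℤ) : (A ++ a :: B).getD A.length 0 = a := by
  rw [List.getD_eq_getElem?_getD, List.getElem?_append_right le_rfl]
  simp

lemma blowupAt_interior (A : List ℤ) (a b : ℤ) (B : List ℤ) :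
    blowupAt (A ++ a :: b :: B) (A.length + 1) = A ++ (a + 1) :: 1 :: (b + 1) :: B := by
  have hlen : (A ++ a :: b :: B).length = A.length + 2 + B.length := by simp; omega
  rw [blowupAt, if_neg (by omega)]
  have h1 : (A ++ a :: b :: B).getD (A.length + 1 - 1) 0 = a := by
    simpa using getD_mid A a (b :: B)
  have h2 : (A ++ a :: b :: B).getD (A.length + 1) 0 = b := by
    have := getD_mid (A ++ [a]) b B
    simpa using this
  rw [h1, h2]
  have h3 : (A ++ a :: b :: B).take (A.length + 1 - 1) = A := by
    simp [List.take_append]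
  have h4 : (A ++ a :: b :: B).drop (A.length + 1 + 1) = B := by
    have he : A ++ a :: b :: B = (A ++ [a, b]) ++ B := by simp
    rw [he, List.drop_left' (by simp)]
  rw [h3, h4]; simp

lemma blowupAt_end (A : List ℤ) (a : ℤ) :
    blowupAt (A ++ [a]) (A.length + 1) = A ++ [a + 1, 1] := by
  rw [blowupAt, if_pos (by simp)]
  have h1 : (A ++ [a]).getD (A.length + 1 - 1) 0 = a := by simpa using getD_mid A a []
  have h3 : (A ++ [a]).take (A.length + 1 - 1) = A := by simp [List.take_append]
  rw [h1, h3]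

def NAdj (l : List ℤ) : Prop := l.Chain' (fun x y => x ≠ 1 ∨ y ≠ 1)

def SeqInv (l : List ℤ) : Prop :=
  l = [0] ∨ l = [1, 1] ∨
    (3 ≤ l.length ∧ (∀ x ∈ l, 1 ≤ x) ∧ 1 ≤ l.count 1 ∧ NAdj l)

lemma inv_step {l l' : List ℤ} (h : SeqInv l) (hb : IsStrictBlowup l l') : SeqInv l' := by
  rcases h with h0 | h1 | ⟨hlen, hpos, hcnt, hadj⟩
  · subst h0
    rcases hb with ⟨A, B, a, b, he, _⟩ | ⟨A, a, he, he'⟩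
    · exfalso; have := congrArg List.length he; simp at this; omega
    · have hA : A = [] := by
        have := congrArg List.length he; simp at this
        exact this
      subst hA; simp at he; subst he; simp at he'; subst he'
      right; left; norm_num
  · subst h1
    rcases hb with ⟨A, B, a, b, he, he'⟩ | ⟨A, a, he, he'⟩
    · have hl2 := congrArg List.length he; simp at hl2
      have hA : A = [] := List.eq_nil_of_length_eq_zero (by omega)
      have hB : B = [] := List.eq_nil_of_length_eq_zero (by omega)
      subst hA; subst hB
      simp at he; obtain ⟨ha, hb'⟩ := he; subst ha; subst hb'; subst he'
      right; right
      refine ⟨by norm_num, by decide, by decide, ?_⟩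
      unfold NAdj List.Chain'; norm_num [List.isChain_cons_cons, List.isChain_singleton]
    · have hA : A = [1] := by
        have hl := congrArg List.length he; simp at hl
        cases A with
        | nil => simp at he
        | cons x t =>
          simp at hl
          subst hl; simp at he; simp [he]
      subst hA; simp at he; subst he; subst he'
      right; right
      refine ⟨by norm_num, by decide, by decide, ?_⟩
      unfold NAdj List.Chain'; norm_num [List.isChain_cons_cons, List.isChain_singleton]
  · right; right
    rcases hb with ⟨A, B, a, b, he, he'⟩ | ⟨A, a, he, he'⟩
    · subst he; subst he'
      have ha : 1 ≤ a := hpos a (by simp)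
      have hbb : 1 ≤ b := hpos b (by simp)
      refine ⟨?_, ?_, ?_, ?_⟩
      · simp at hlen ⊢; omega
      · intro x hx; simp at hx
        rcases hx with hx | hx | hx | hx | hx
        · exact hpos x (by simp [hx])
        · omega
        · omega
        · omega
        · exact hpos x (by simp [hx])
      · have : (1 : ℤ) ∈ A ++ (a + 1) :: 1 :: (b + 1) :: B := by simp
        exact List.count_pos_iff.mpr this
      · unfold NAdj List.Chain' at hadj ⊢
        rw [List.isChain_append] at hadj ⊢
        obtain ⟨hA, hrest, hglue⟩ := hadj
        rw [List.isChain_cons_cons] at hrest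
        obtain ⟨hab, hbB⟩ := hrest
        have hB : List.Chain' (fun x y => x ≠ 1 ∨ y ≠ 1) B := (List.isChain_cons.mp hbB).2
        refine ⟨hA, ?_, ?_⟩
        · rw [List.isChain_cons_cons]
          refine ⟨Or.inl (by omega), ?_⟩
          rw [List.isChain_cons_cons]
          refine ⟨Or.inr (by omega), ?_⟩
          exact List.isChain_cons.mpr ⟨fun y _ => Or.inl (by omega), hB⟩
        · intro x hx y hy
          simp at hy; subst hy
          exact Or.inr (by omega)
    · subst he; subst he'
      have ha : 1 ≤ a := hpos a (by simp)
      refine ⟨?_, ?_, ?_, ?_⟩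
      · simp at hlen ⊢; omega
      · intro x hx; simp at hx
        rcases hx with hx | hx | hx
        · exact hpos x (by simp [hx])
        · omega
        · omega
      · exact List.count_pos_iff.mpr (by simp)
      · unfold NAdj List.Chain' at hadj ⊢
        rw [List.isChain_append] at hadj ⊢
        obtain ⟨hA, -, -⟩ := hadj
        refine ⟨hA, ?_, ?_⟩
        · rw [List.isChain_cons_cons]
          exact ⟨Or.inl (by omega), List.isChain_singleton 1⟩
        · intro x hx y hy
          simp at hy; subst hy
          exact Or.inr (by omega)

lemma inv_null {l : List ℤ} (h : IsNullSeq l) : SeqInv l := by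
  induction h with
  | refl => left; rfl
  | tail _ hb ih => exact inv_step ih hb

def SeqGoal (l : List ℤ) : Prop :=
  ∃ (r : ℕ) (f : ℕ → List ℤ),
      f 0 = [2, 1, 2] ∧ f r = l ∧
      (∀ j ≤ r, (f j).count 1 = 1) ∧
      (∀ j < r, ∃ i : ℕ, 1 ≤ i ∧ i ≤ (f j).length ∧ (f j).getD (i - 1) 0 = 1 ∧
        ((2 ≤ i ∧ f (j + 1) = blowupAt (f j) (i - 1)) ∨
          f (j + 1) = blowupAt (f j) i))

lemma extend_chain {l₀ l : List ℤ} (G : SeqGoal l₀) (hone : l.count 1 = 1)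
    (hstep : ∃ i : ℕ, 1 ≤ i ∧ i ≤ l₀.length ∧ l₀.getD (i - 1) 0 = 1 ∧
      ((2 ≤ i ∧ l = blowupAt l₀ (i - 1)) ∨ l = blowupAt l₀ i)) : SeqGoal l := by
  obtain ⟨r, f, hf0, hfr, hc, hs⟩ := G
  refine ⟨r + 1, fun j => if j ≤ r then f j else l, ?_, ?_, ?_, ?_⟩
  · simpa using hf0
  · simp
  · intro j hj
    by_cases h : j ≤ r
    · simpa [h] using hc j h
    · simp only [if_neg h]; exact hone
  · intro j hj
    by_cases h : j < r
    · obtain ⟨i, hi⟩ := hs j h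
      refine ⟨i, ?_⟩
      simpa only [if_pos (le_of_lt h), if_pos (Nat.succ_le_of_lt h)] using hi
    · have hj' : j = r := by omega
      subst hj'
      obtain ⟨i, hi1, hi2, hi3, hi4⟩ := hstep
      refine ⟨i, ?_⟩
      have e1 : (if j ≤ j then f j else l) = l₀ := by rw [if_pos le_rfl]; exact hfr
      have e2 : (if j + 1 ≤ j then f (j + 1) else l) = l := if_neg (by omega)
      simp only [e1, e2]
      exact ⟨hi1, hi2, hi3, hi4⟩

lemma main_aux {l : List ℤ} (h : IsNullSeq l) :
    3 ≤ l.length → l.count 1 = 1 → SeqGoal l := by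
  induction h with
  | refl => intro hlen _; simp at hlen
  | @tail l₀ l h0 hb ih =>
    intro hlen hone
    rcases inv_null h0 with h00 | h01 | ⟨hlen0, hpos, hcnt, hadj⟩
    · subst h00
      rcases hb with ⟨A, B, a, b, he, _⟩ | ⟨A, a, he, he'⟩
      · exfalso
        rcases A with _ | ⟨x, t⟩ <;> simp at he
      · have hA : A = [] := by
          have := congrArg List.length he; simp at this
          exact this
        subst hA; simp at he; subst he; subst he'
        simp at hlen
    · subst h01
      rcases hb with ⟨A, B, a, b, he, he'⟩ | ⟨A, a, he, he'⟩
      · have hl2 := congrArg List.length he; simp at hl2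
        have hA : A = [] := List.eq_nil_of_length_eq_zero (by omega)
        have hB : B = [] := List.eq_nil_of_length_eq_zero (by omega)
        subst hA; subst hB
        simp at he; obtain ⟨ha, hb'⟩ := he; subst ha; subst hb'; subst he'
        refine ⟨0, fun _ => [2, 1, 2], rfl, by norm_num, ?_, by omega⟩
        intro j _
        show ([2, 1, 2] : List ℤ).count 1 = 1
        decide
      · have hA : A = [1] := by
          have hl := congrArg List.length he; simp at hl
          cases A with
          | nil => simp at he
          | cons x t =>
            simp at hl
            subst hl; simp at he; simp [he]
        subst hA; simp at he; subst he; subst he'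
        norm_num [List.count_cons] at hone
    · -- main case
      have key : l₀.count 1 = 1 ∧ ∃ i : ℕ, 1 ≤ i ∧ i ≤ l₀.length ∧ l₀.getD (i - 1) 0 = 1 ∧
          ((2 ≤ i ∧ l = blowupAt l₀ (i - 1)) ∨ l = blowupAt l₀ i) := by
        rcases hb with ⟨A, B, a, b, he, he'⟩ | ⟨A, a, he, he'⟩
        · subst he; subst he'
          have ha : 1 ≤ a := hpos a (by simp)
          have hbb : 1 ≤ b := hpos b (by simp)
          have ha' : a + 1 ≠ 1 := by omega
          have hb' : b + 1 ≠ 1 := by omega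
          have nab : a ≠ 1 ∨ b ≠ 1 := by
            have h1 := (List.isChain_append.mp hadj).2.1
            exact (List.isChain_cons_cons.mp h1).1
          rcases eq_or_ne a 1 with ha1 | ha1 <;> rcases eq_or_ne b 1 with hb1 | hb1
          · exact ((nab.elim (fun h => h ha1) (fun h => h hb1))).elim
          · -- a = 1, b ≠ 1 : i = A.length + 1
            refine ⟨?_, A.length + 1, by omega, ?_, ?_, Or.inr ?_⟩
            · simp [List.count_append, List.count_cons, ha', hb', ha1, hb1] at hone ⊢
              omega
            · simp only [List.length_append, List.length_cons]
              omega
            · subst ha1; simpa using getD_mid A 1 (b :: B)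
            · subst ha1; exact (blowupAt_interior A 1 b B).symm
          · -- a ≠ 1, b = 1 : i = A.length + 2
            refine ⟨?_, A.length + 2, by omega, ?_, ?_, Or.inl ⟨by omega, ?_⟩⟩
            · simp [List.count_append, List.count_cons, ha', hb', ha1, hb1] at hone ⊢
              omega
            · simp only [List.length_append, List.length_cons]
              omega
            · subst hb1
              have h1 : (A.length + 2 - 1) = (A ++ [a]).length := by simp
              have he2 : A ++ a :: 1 :: B = (A ++ [a]) ++ 1 :: B := by simp
              rw [h1, he2]
              exact getD_mid (A ++ [a]) 1 B
            · subst hb1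
              have h1 : A.length + 2 - 1 = A.length + 1 := rfl
              rw [h1]
              exact (blowupAt_interior A a 1 B).symm
          · -- neither = 1 : contradiction with count
            exfalso
            simp [List.count_append, List.count_cons, ha', hb', ha1, hb1] at hone hcnt
            omega
        · subst he; subst he'
          have ha : 1 ≤ a := hpos a (by simp)
          have ha' : a + 1 ≠ 1 := by omega
          have ha1 : a = 1 := by
            by_contra hne
            simp [List.count_append, List.count_cons, ha', hne] at hone hcnt
            rw [List.count_eq_zero] at hone
            exact hone hcnt
          refine ⟨?_, A.length + 1, by omega, by simp, ?_, Or.inr ?_⟩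
          · simp [List.count_append, List.count_cons, ha', ha1] at hone ⊢
            omega
          · subst ha1; simpa using getD_mid A 1 []
          · subst ha1; exact (blowupAt_end A 1).symm
      obtain ⟨hone0, hstep⟩ := key
      exact extend_chain (ih hlen0 hone0) hone hstep

end aux

theorem stmt9 (l : List ℤ) (hl : IsNullSeq l) (hlen : 3 ≤ l.length)
    (hone : l.count 1 = 1) :
    ∃ (r : ℕ) (f : ℕ → List ℤ),
      f 0 = [2, 1, 2] ∧ f r = l ∧
      (∀ j ≤ r, (f j).count 1 = 1) ∧
      (∀ j < r, ∃ i : ℕ, 1 ≤ i ∧ i ≤ (f j).length ∧ (f j).getD (i - 1) 0 = 1 ∧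
        ((2 ≤ i ∧ f (j + 1) = blowupAt (f j) (i - 1)) ∨
          f (j + 1) = blowupAt (f j) i)) := by
  exact main_aux hl hlen hone
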